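/- For all natural numbers m, n ≥ 1, the sum over all pairs (i,j) with 0 ≤ i ≤ m, 0 ≤ j ≤ n, and i+j odd, of (-1)^j · 2^{-(δ_{i,0}+δ_{i,m}+δ_{j,0}+δ_{j,n})}, equals zero. -/
import Mathlib

open Finset

/-- One-dimensional alternating sum with halved endpoints vanishes. -/
lemma key_sum (k : ℕ) (hk : 1 ≤ k) :
    ∑ j ∈ range (k + 1), (-1 : ℚ) ^ j *
      (2 : ℚ) ^ (-(((if j = 0 then 1 else 0) + (if j = k then 1 else 0) : ℤ))) = 0 := by
  induction k with
  | zero => exact absurd hk (by norm_num)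
  | succ k ih =>
    rcases Nat.lt_or_ge k 1 with h | hk1
    · interval_cases k
      norm_num [Finset.sum_range_succ]
    · have ihk := ih hk1
      rw [sum_range_succ] at ihk
      rw [sum_range_succ, sum_range_succ]
      have hcong : ∑ j ∈ range k, (-1:ℚ)^j *
            (2:ℚ)^(-(((if j=0 then 1 else 0)+(if j=k+1 then 1 else 0):ℤ)))
          = ∑ j ∈ range k, (-1:ℚ)^j *
            (2:ℚ)^(-(((if j=0 then 1 else 0)+(if j=k then 1 else 0):ℤ))) := by
        refine sum_congr rfl fun j hj => ?_
        have hj' : j < k := mem_range.mp hj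
        rw [if_neg (by omega : ¬ j = k + 1), if_neg (by omega : ¬ j = k)]
      rw [hcong]
      have h1 : ¬ k = 0 := by omega
      have h2 : ¬ k = k + 1 := by omega
      have h3 : ¬ k + 1 = 0 := by omega
      rw [if_neg h1, if_pos rfl] at ihk
      rw [if_neg h1, if_neg h2, if_neg h3, if_pos rfl]
      have hpow : ((-1:ℚ)) ^ (k+1) = (-1:ℚ)^k * (-1) := pow_succ _ _
      norm_num [hpow] at ihk ⊢
      linarith

/-- **Statement 0** (Lemma on even lattice sums): for all `m, n ≥ 1`, the sum over all
pairs `(i,j)` with `0 ≤ i ≤ m`, `0 ≤ j ≤ n` and `i + j` odd of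
`(-1)^j · 2^{-(δ_{i0} + δ_{im} + δ_{j0} + δ_{jn})}` vanishes. -/
theorem odd_lattice_sum_eq_zero (m n : ℕ) (hm : 1 ≤ m) (hn : 1 ≤ n) :
    ∑ p ∈ (Finset.range (m + 1) ×ˢ Finset.range (n + 1)).filter
        (fun p => (p.1 + p.2) % 2 = 1),
      (-1 : ℚ) ^ p.2 *
        (2 : ℚ) ^ (-(((if p.1 = 0 then 1 else 0) + (if p.1 = m then 1 else 0) +
            (if p.2 = 0 then 1 else 0) + (if p.2 = n then 1 else 0) : ℤ))) = 0 := by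
  classical
  set a : ℕ → ℚ := fun i =>
    (2:ℚ)^(-(((if i=0 then 1 else 0)+(if i=m then 1 else 0):ℤ))) with ha
  set b : ℕ → ℚ := fun j =>
    (-1:ℚ)^j * (2:ℚ)^(-(((if j=0 then 1 else 0)+(if j=n then 1 else 0):ℤ))) with hb
  have hb0 : ∑ j ∈ range (n+1), b j = 0 := key_sum n hn
  have ha0 : ∑ i ∈ range (m+1), (-1:ℚ)^i * a i = 0 := key_sum m hm
  rw [Finset.sum_filter]
  have hstep : ∀ p ∈ Finset.range (m + 1) ×ˢ Finset.range (n + 1),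
      (if (p.1 + p.2) % 2 = 1 then
        (-1 : ℚ) ^ p.2 *
        (2 : ℚ) ^ (-(((if p.1 = 0 then 1 else 0) + (if p.1 = m then 1 else 0) +
            (if p.2 = 0 then 1 else 0) + (if p.2 = n then 1 else 0) : ℤ))) else 0)
      = a p.1 * b p.2 / 2 - ((-1:ℚ)^p.1 * a p.1) * ((-1:ℚ)^p.2 * b p.2) / 2 := by
    intro p _
    obtain ⟨i, j⟩ := p
    have hab : (-1 : ℚ) ^ j *
        (2 : ℚ) ^ (-(((if i = 0 then 1 else 0) + (if i = m then 1 else 0) +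
            (if j = 0 then 1 else 0) + (if j = n then 1 else 0) : ℤ)))
        = a i * b j := by
      simp only [ha, hb]
      rw [show (((if i = 0 then 1 else 0) + (if i = m then 1 else 0) +
            (if j = 0 then 1 else 0) + (if j = n then 1 else 0) : ℤ))
          = ((if i=0 then 1 else 0)+(if i=m then 1 else 0):ℤ)
            + ((if j=0 then 1 else 0)+(if j=n then 1 else 0):ℤ) by ring,
        neg_add, zpow_add₀ (two_ne_zero)]
      ring
    by_cases h : (i + j) % 2 = 1
    · rw [if_pos h, hab]
      have hodd : Odd (i + j) := Nat.odd_iff.mpr h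
      have hpm : (-1:ℚ)^i * (-1:ℚ)^j = -1 := by
        rw [← pow_add]; exact hodd.neg_one_pow
      dsimp only
      linear_combination (a i * b j / 2) * hpm
    · rw [if_neg h]
      have heven : Even (i + j) := Nat.even_iff.mpr (by omega)
      have hpm : (-1:ℚ)^i * (-1:ℚ)^j = 1 := by
        rw [← pow_add]; exact heven.neg_one_pow
      dsimp only
      linear_combination ((2:ℚ)^(-(((if j=0 then 1 else 0)+(if j=n then 1 else 0)):ℤ))
        * a i * (-1:ℚ)^j / 2) * hpm
  rw [Finset.sum_congr rfl hstep, Finset.sum_sub_distrib]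
  rw [Finset.sum_product, Finset.sum_product]
  have e1 : ∑ i ∈ range (m+1), ∑ j ∈ range (n+1), a i * b j / 2 = 0 := by
    have : ∀ i ∈ range (m+1), ∑ j ∈ range (n+1), a i * b j / 2
        = a i * (∑ j ∈ range (n+1), b j) / 2 := by
      intro i _
      rw [Finset.mul_sum, Finset.sum_div]
    rw [Finset.sum_congr rfl this]
    simp [hb0]
  have e2 : ∑ i ∈ range (m+1), ∑ j ∈ range (n+1),
      ((-1:ℚ)^i * a i) * ((-1:ℚ)^j * b j) / 2 = 0 := by
    have : ∀ i ∈ range (m+1), ∑ j ∈ range (n+1),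
        ((-1:ℚ)^i * a i) * ((-1:ℚ)^j * b j) / 2
        = ((-1:ℚ)^i * a i) * (∑ j ∈ range (n+1), ((-1:ℚ)^j * b j)) / 2 := by
      intro i _
      rw [Finset.mul_sum, Finset.sum_div]
    rw [Finset.sum_congr rfl this, ← Finset.sum_div, ← Finset.sum_mul, ha0]
    simp
  rw [e1, e2, sub_zero]
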